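/- Let (X, μ_X) be a σ-finite measure space, let (Θ, m) be a measure space with g : Θ → ℝ a probability density with respect to m that is positive a.e., let f : X × Θ → ℝ be measurable with ∫_Θ f(x, θ) dm(θ) = 1 for μ_X-a.e. x, and let α : X → ℝ be such that α and α² are μ_X-integrable, x ↦ χ²(f(x,·) ‖ g) is μ_X-integrable, and (x, θ) ↦ (f(x,θ)/g(θ) − 1) is square-integrable with respect to the product of μ_X and the measure g·m (so that the Fubini and Cauchy–Schwarz manipulations are valid). Then χ²( ∫_X α(x)·f(x,·) dμ_X(x) ‖ g ) ≤ (∫_X α(x)² dμ_X(x)) · (∫_X χ²(f(x,·) ‖ g) dμ_X(x)) + (∫_X α(x) dμ_X(x) − 1)². -/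

import Mathlib

open MeasureTheory

private lemma abs_mul_le_half (a b : ℝ) : |a * b| ≤ (a ^ 2 + b ^ 2) / 2 := by
  rw [abs_mul]
  nlinarith [sq_nonneg (|a| - |b|), sq_abs a, sq_abs b, abs_nonneg a, abs_nonneg b]

private lemma abs_mul_mul_le {a b gv : ℝ} (hg : 0 ≤ gv) :
    |a * b * gv| ≤ (a ^ 2 * gv + b ^ 2 * gv) / 2 := by
  rw [abs_mul, abs_of_nonneg hg]
  calc |a * b| * gv ≤ ((a ^ 2 + b ^ 2) / 2) * gv :=
        mul_le_mul_of_nonneg_right (abs_mul_le_half a b) hg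
    _ = (a ^ 2 * gv + b ^ 2 * gv) / 2 := by ring

private lemma abs_mul_le' {b gv : ℝ} (hg : 0 ≤ gv) : |b * gv| ≤ (b ^ 2 * gv + gv) / 2 := by
  rw [abs_mul, abs_of_nonneg hg]
  have h0 : |b| ≤ (b ^ 2 + 1) / 2 := by
    nlinarith [sq_abs b, abs_nonneg b, sq_nonneg (|b| - 1)]
  calc |b| * gv ≤ ((b ^ 2 + 1) / 2) * gv := mul_le_mul_of_nonneg_right h0 hg
    _ = _ := by ring

private lemma cs_aux {X : Type*} [MeasurableSpace X] {μ : Measure X} {u v : X → ℝ}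
    (hu : AEStronglyMeasurable u μ) (hv : AEStronglyMeasurable v μ)
    (hu2 : Integrable (fun x => u x ^ 2) μ) (hv2 : Integrable (fun x => v x ^ 2) μ) :
    (∫ x, u x * v x ∂μ) ^ 2 ≤ (∫ x, u x ^ 2 ∂μ) * (∫ x, v x ^ 2 ∂μ) := by
  have hu' : MemLp u 2 μ := (memLp_two_iff_integrable_sq hu).2 hu2
  have hv' : MemLp v 2 μ := (memLp_two_iff_integrable_sq hv).2 hv2
  have hpq : Real.HolderConjugate 2 2 := Real.holderConjugate_iff.mpr ⟨one_lt_two, by norm_num⟩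
  have h2 : ENNReal.ofReal (2 : ℝ) = 2 := by norm_num
  have key := integral_mul_norm_le_Lp_mul_Lq hpq (h2 ▸ hu') (h2 ▸ hv')
  have eu : ∫ x, ‖u x‖ ^ (2 : ℝ) ∂μ = ∫ x, u x ^ 2 ∂μ := by
    apply integral_congr_ae
    filter_upwards with x
    rw [Real.norm_eq_abs, show ((2 : ℝ)) = ((2 : ℕ) : ℝ) by norm_num, Real.rpow_natCast, sq_abs]
  have ev : ∫ x, ‖v x‖ ^ (2 : ℝ) ∂μ = ∫ x, v x ^ 2 ∂μ := by
    apply integral_congr_ae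
    filter_upwards with x
    rw [Real.norm_eq_abs, show ((2 : ℝ)) = ((2 : ℕ) : ℝ) by norm_num, Real.rpow_natCast, sq_abs]
  have hA : (0 : ℝ) ≤ ∫ x, u x ^ 2 ∂μ := integral_nonneg fun x => sq_nonneg _
  have hB : (0 : ℝ) ≤ ∫ x, v x ^ 2 ∂μ := integral_nonneg fun x => sq_nonneg _
  have hrt : ∀ {t : ℝ}, 0 ≤ t → (t ^ (1 / 2 : ℝ)) ^ 2 = t := by
    intro t ht
    rw [← Real.rpow_natCast (t ^ (1 / 2 : ℝ)) 2, ← Real.rpow_mul ht]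
    norm_num
  calc (∫ x, u x * v x ∂μ) ^ 2 = |∫ x, u x * v x ∂μ| ^ 2 := (sq_abs _).symm
    _ ≤ (∫ x, ‖u x‖ * ‖v x‖ ∂μ) ^ 2 := by
        apply pow_le_pow_left₀ (abs_nonneg _)
        refine le_trans ?_ (le_refl _)
        calc |∫ x, u x * v x ∂μ| ≤ ∫ x, ‖u x * v x‖ ∂μ := by
              rw [← Real.norm_eq_abs]; exact norm_integral_le_integral_norm _
          _ = ∫ x, ‖u x‖ * ‖v x‖ ∂μ := by simp only [norm_mul]
    _ ≤ ((∫ x, u x ^ 2 ∂μ) ^ (1 / 2 : ℝ) * (∫ x, v x ^ 2 ∂μ) ^ (1 / 2 : ℝ)) ^ 2 := by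
        apply pow_le_pow_left₀ (integral_nonneg fun x => mul_nonneg (norm_nonneg _) (norm_nonneg _))
        rw [← eu, ← ev]
        exact key
    _ = (∫ x, u x ^ 2 ∂μ) * (∫ x, v x ^ 2 ∂μ) := by rw [mul_pow, hrt hA, hrt hB]

/-- Chi-squared divergence of a mixture:
`χ²(∫ α(x) f(x,·) dμ_X ‖ g) ≤ (∫ α²) (∫ χ²(f(x,·) ‖ g)) + (∫ α − 1)²`,
where `χ²(f ‖ g) := ∫ (f/g − 1)² g dm`. -/
theorem chiSq_mixture_le {X Θ : Type*} [MeasurableSpace X] [MeasurableSpace Θ]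
    (μX : Measure X) [SigmaFinite μX] (m : Measure Θ) [SigmaFinite m]
    (g : Θ → ℝ) (hg_meas : Measurable g) (hg_nonneg : ∀ θ, 0 ≤ g θ)
    (hg_int : ∫ θ, g θ ∂m = 1) (hg_pos : ∀ᵐ θ ∂m, 0 < g θ)
    (f : X → Θ → ℝ) (hf_meas : Measurable (Function.uncurry f))
    (hf_int : ∀ᵐ x ∂μX, ∫ θ, f x θ ∂m = 1)
    (α : X → ℝ) (hα : Integrable α μX) (hα2 : Integrable (fun x => α x ^ 2) μX)
    (hχ : Integrable (fun x => ∫ θ, (f x θ / g θ - 1) ^ 2 * g θ ∂m) μX)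
    (hsq : Integrable (fun p : X × Θ => (f p.1 p.2 / g p.2 - 1) ^ 2 * g p.2) (μX.prod m)) :
    ∫ θ, ((∫ x, α x * f x θ ∂μX) / g θ - 1) ^ 2 * g θ ∂m
      ≤ (∫ x, α x ^ 2 ∂μX) * (∫ x, (∫ θ, (f x θ / g θ - 1) ^ 2 * g θ ∂m) ∂μX)
        + (∫ x, α x ∂μX - 1) ^ 2 := by
  set c : ℝ := ∫ x, α x ∂μX - 1 with hc
  set Cα : ℝ := ∫ x, α x ^ 2 ∂μX with hCα
  have hCα_nonneg : 0 ≤ Cα := integral_nonneg fun x => sq_nonneg _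
  -- measurability facts
  have hh_meas : Measurable (fun p : X × Θ => f p.1 p.2 / g p.2 - 1) :=
    (hf_meas.div (hg_meas.comp measurable_snd)).sub measurable_const
  have hg_integrable : Integrable g m := by
    by_contra hcon
    rw [integral_undef hcon] at hg_int
    norm_num at hg_int
  set A : Θ → ℝ := fun θ => ∫ x, α x * (f x θ / g θ - 1) ∂μX with hA_def
  have hA_meas : AEStronglyMeasurable A m := by
    have hP : AEStronglyMeasurable
        (fun q : Θ × X => α q.2 * (f q.2 q.1 / g q.1 - 1)) (m.prod μX) := by
      refine AEStronglyMeasurable.mul ?_ ?_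
      · exact hα.aestronglyMeasurable.comp_snd
      · exact (((hf_meas.comp (measurable_snd.prodMk measurable_fst)).div
          (hg_meas.comp measurable_fst)).sub measurable_const).aestronglyMeasurable
    exact hP.integral_prod_right'
  -- uncurried restatements
  have hsq' : Integrable (Function.uncurry fun x θ => (f x θ / g θ - 1) ^ 2 * g θ) (μX.prod m) :=
    hsq
  -- product integrability of α(x) h(x,θ) g(θ)
  have hG : Integrable (Function.uncurry fun x θ => α x * (f x θ / g θ - 1) * g θ) (μX.prod m) := by
    have hbound : Integrable
        (fun p : X × Θ => (α p.1 ^ 2 * g p.2 + (f p.1 p.2 / g p.2 - 1) ^ 2 * g p.2) / 2)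
        (μX.prod m) := ((hα2.mul_prod hg_integrable).add hsq).div_const 2
    refine hbound.mono' ?_ ?_
    · exact ((hα.aestronglyMeasurable.comp_fst.mul hh_meas.aestronglyMeasurable).mul
        (hg_meas.comp measurable_snd).aestronglyMeasurable)
    · filter_upwards with p
      show ‖α p.1 * (f p.1 p.2 / g p.2 - 1) * g p.2‖ ≤ _
      rw [Real.norm_eq_abs]
      exact abs_mul_mul_le (a := α p.1) (b := f p.1 p.2 / g p.2 - 1) (hg_nonneg p.2)
  -- key a.e. facts in θ
  have key_theta : ∀ᵐ θ ∂m,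
      ((∫ x, α x * f x θ ∂μX) / g θ - 1) ^ 2 * g θ = (A θ + c) ^ 2 * g θ ∧
      A θ ^ 2 * g θ ≤ Cα * (∫ x, (f x θ / g θ - 1) ^ 2 * g θ ∂μX) := by
    filter_upwards [hg_pos, hsq.prod_left_ae] with θ hθ hint
    have hgne : g θ ≠ 0 := ne_of_gt hθ
    have hhx_meas : AEStronglyMeasurable (fun x => f x θ / g θ - 1) μX :=
      (((hf_meas.comp (measurable_id.prodMk measurable_const)).div_const _).sub_const
        _).aestronglyMeasurable
    have h2int : Integrable (fun x => (f x θ / g θ - 1) ^ 2) μX := by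
      have h' := hint.mul_const (g θ)⁻¹
      refine h'.congr ?_
      filter_upwards with x
      rw [mul_assoc, mul_inv_cancel₀ hgne, mul_one]
    have hαh : Integrable (fun x => α x * (f x θ / g θ - 1)) μX := by
      refine ((hα2.add h2int).div_const 2).mono' (hα.aestronglyMeasurable.mul hhx_meas) ?_
      filter_upwards with x
      rw [Real.norm_eq_abs]
      exact abs_mul_le_half (α x) (f x θ / g θ - 1)
    constructor
    · have hrewrite : ∫ x, α x * f x θ ∂μX = g θ * (A θ + ∫ x, α x ∂μX) := by
        calc ∫ x, α x * f x θ ∂μX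
            = ∫ x, g θ * (α x * (f x θ / g θ - 1) + α x) ∂μX := by
              apply integral_congr_ae
              filter_upwards with x
              field_simp
              ring
          _ = g θ * (A θ + ∫ x, α x ∂μX) := by
              rw [integral_const_mul, integral_add hαh hα, hA_def]
      rw [hrewrite, mul_div_cancel_left₀ _ hgne, hc]
      ring
    · have hcs := cs_aux hα.aestronglyMeasurable hhx_meas hα2 h2int
      have hmr : ∫ x, (f x θ / g θ - 1) ^ 2 * g θ ∂μX
          = (∫ x, (f x θ / g θ - 1) ^ 2 ∂μX) * g θ := integral_mul_const _ _
      rw [hmr]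
      calc A θ ^ 2 * g θ
          ≤ (Cα * ∫ x, (f x θ / g θ - 1) ^ 2 ∂μX) * g θ := by
            refine mul_le_mul_of_nonneg_right ?_ (hg_nonneg θ)
            simpa [hA_def, hCα] using hcs
        _ = Cα * ((∫ x, (f x θ / g θ - 1) ^ 2 ∂μX) * g θ) := by ring
  -- integrability in θ of the various pieces
  have hHg : Integrable (fun θ => ∫ x, (f x θ / g θ - 1) ^ 2 * g θ ∂μX) m :=
    hsq.integral_prod_right
  have hA2_meas : AEStronglyMeasurable (fun θ => A θ ^ 2) m := by
    exact hA_meas.pow 2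
  have hA2g : Integrable (fun θ => A θ ^ 2 * g θ) m := by
    refine (hHg.const_mul Cα).mono' (hA2_meas.mul hg_meas.aestronglyMeasurable) ?_
    filter_upwards [key_theta] with θ hθ
    have hnn : (0 : ℝ) ≤ A θ ^ 2 * g θ := mul_nonneg (sq_nonneg _) (hg_nonneg θ)
    rw [Real.norm_eq_abs, abs_of_nonneg hnn]
    exact hθ.2
  have hAg : Integrable (fun θ => A θ * g θ) m := by
    refine ((hA2g.add hg_integrable).div_const 2).mono'
      (hA_meas.mul hg_meas.aestronglyMeasurable) ?_
    filter_upwards with θ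
    rw [Real.norm_eq_abs]
    exact abs_mul_le' (b := A θ) (hg_nonneg θ)
  -- the cross term vanishes
  have hT : ∫ θ, A θ * g θ ∂m = 0 := by
    calc ∫ θ, A θ * g θ ∂m
        = ∫ θ, ∫ x, α x * (f x θ / g θ - 1) * g θ ∂μX ∂m := by
          apply integral_congr_ae
          filter_upwards with θ
          rw [hA_def]
          exact (integral_mul_const _ _).symm
      _ = ∫ x, ∫ θ, α x * (f x θ / g θ - 1) * g θ ∂m ∂μX := (integral_integral_swap hG).symm
      _ = ∫ x, (0 : ℝ) ∂μX := by
          apply integral_congr_ae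
          filter_upwards [hf_int, hsq.prod_right_ae] with x hx hint
          have hhg_meas : AEStronglyMeasurable (fun θ => (f x θ / g θ - 1) * g θ) m :=
            ((((hf_meas.comp measurable_prodMk_left).div hg_meas).sub
              measurable_const).mul hg_meas).aestronglyMeasurable
          have hhg : Integrable (fun θ => (f x θ / g θ - 1) * g θ) m := by
            refine ((hint.add hg_integrable).div_const 2).mono' hhg_meas ?_
            filter_upwards with θ
            rw [Real.norm_eq_abs]
            exact abs_mul_le' (b := f x θ / g θ - 1) (hg_nonneg θ)
          have heq : (fun θ => (f x θ / g θ - 1) * g θ) =ᵐ[m] fun θ => f x θ - g θ := by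
            filter_upwards [hg_pos] with θ hθ
            field_simp
          have hfx : Integrable (fun θ => f x θ) m := by
            refine (hhg.add hg_integrable).congr ?_
            filter_upwards [hg_pos] with θ hθ
            simp only [Pi.add_apply]
            rw [sub_mul, div_mul_cancel₀ _ hθ.ne']
            ring
          simp only [mul_assoc]
          rw [integral_const_mul]
          have hz : ∫ θ, (f x θ / g θ - 1) * g θ ∂m = 0 := by
            rw [integral_congr_ae heq, integral_sub hfx hg_integrable, hx, hg_int]
            ring
          rw [hz, mul_zero]
      _ = 0 := integral_zero _ _
  -- rewrite the LHS
  have hLHS : ∫ θ, ((∫ x, α x * f x θ ∂μX) / g θ - 1) ^ 2 * g θ ∂m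
      = ∫ θ, (A θ + c) ^ 2 * g θ ∂m := by
    apply integral_congr_ae
    filter_upwards [key_theta] with θ hθ using hθ.1
  -- expand the square
  have hexp : ∫ θ, (A θ + c) ^ 2 * g θ ∂m
      = ∫ θ, A θ ^ 2 * g θ ∂m + ((2 * c) * ∫ θ, A θ * g θ ∂m + c ^ 2 * ∫ θ, g θ ∂m) := by
    calc ∫ θ, (A θ + c) ^ 2 * g θ ∂m
        = ∫ θ, (A θ ^ 2 * g θ + ((2 * c) * (A θ * g θ) + c ^ 2 * g θ)) ∂m := by
          apply integral_congr_ae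
          filter_upwards with θ
          ring
      _ = _ := by
          have h1 : Integrable (fun θ => (2 * c) * (A θ * g θ)) m := hAg.const_mul (2 * c)
          have h2 : Integrable (fun θ => c ^ 2 * g θ) m := hg_integrable.const_mul (c ^ 2)
          have h12 : Integrable (fun θ => (2 * c) * (A θ * g θ) + c ^ 2 * g θ) m := h1.add h2
          rw [integral_add hA2g h12, integral_add h1 h2, integral_const_mul, integral_const_mul]
  -- Cauchy-Schwarz bound on the main term
  have hswap2 : ∫ θ, (∫ x, (f x θ / g θ - 1) ^ 2 * g θ ∂μX) ∂m
      = ∫ x, (∫ θ, (f x θ / g θ - 1) ^ 2 * g θ ∂m) ∂μX := (integral_integral_swap hsq').symm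
  have hmono : ∫ θ, A θ ^ 2 * g θ ∂m
      ≤ Cα * ∫ x, (∫ θ, (f x θ / g θ - 1) ^ 2 * g θ ∂m) ∂μX := by
    calc ∫ θ, A θ ^ 2 * g θ ∂m
        ≤ ∫ θ, Cα * (∫ x, (f x θ / g θ - 1) ^ 2 * g θ ∂μX) ∂m := by
          refine integral_mono_ae hA2g (hHg.const_mul Cα) ?_
          filter_upwards [key_theta] with θ hθ using hθ.2
      _ = Cα * ∫ θ, (∫ x, (f x θ / g θ - 1) ^ 2 * g θ ∂μX) ∂m := integral_const_mul _ _
      _ = Cα * ∫ x, (∫ θ, (f x θ / g θ - 1) ^ 2 * g θ ∂m) ∂μX := by rw [hswap2]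
  rw [hLHS, hexp, hT, hg_int]
  calc ∫ θ, A θ ^ 2 * g θ ∂m + (2 * c * 0 + c ^ 2 * 1)
      = ∫ θ, A θ ^ 2 * g θ ∂m + c ^ 2 := by ring
    _ ≤ Cα * ∫ x, (∫ θ, (f x θ / g θ - 1) ^ 2 * g θ ∂m) ∂μX + c ^ 2 := by linarith [hmono]
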